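/- Fix hyperbolic filling data for a metric space Z with parameters a, τ, and let Z̄ denote the metric completion of Z with extended metric d̄. For every z ∈ Z̄ there exists a sequence of vertices (v_n)_{n ∈ ℤ} with h(v_n) = n, v_n ∼ v_{n+1} for all n, and d̄(z, v_n) < (τ/3)·a^n for all n ∈ ℤ (a vertical geodesic line anchored at z). Moreover, if m ∈ ℤ and z ∈ S_m (viewing Z ⊆ Z̄), then the sequence can be chosen so that v_m = (z, m). -/

import Mathlib

open Filter

/-- Hyperbolic filling data for a metric space `Z` with parameter `a`: a choice, for
each `n : ℤ`, of a maximal `a^n`-separated subset `S n` of `Z`. -/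
structure HypFilling (Z : Type*) [MetricSpace Z] (a : ℝ) where
  S : ℤ → Set Z
  separated : ∀ n : ℤ, ∀ x ∈ S n, ∀ y ∈ S n, x ≠ y → a ^ n ≤ dist x y
  maximal : ∀ (n : ℤ) (z : Z), ∃ x ∈ S n, dist z x < a ^ n

namespace HypFilling

variable {Z : Type*} [MetricSpace Z] {a : ℝ}

/-- The vertex set of the hyperbolic filling. -/
def Vertex (F : HypFilling Z a) : Type _ := {p : Z × ℤ // p.1 ∈ F.S p.2}

/-- The height of a vertex. -/
def height {F : HypFilling Z a} (v : F.Vertex) : ℤ := v.1.2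

/-- The underlying point in `Z` of a vertex. -/
def pt {F : HypFilling Z a} (v : F.Vertex) : Z := v.1.1

/-- Adjacency in the hyperbolic filling graph with dilation parameter `τ`: distinct
vertices of heights differing by at most `1` whose associated dilated balls meet. -/
def Adj {F : HypFilling Z a} (τ : ℝ) (v w : F.Vertex) : Prop :=
  v ≠ w ∧ |height v - height w| ≤ 1 ∧
    ∃ z : Z, dist z (pt v) < τ * a ^ height v ∧ dist z (pt w) < τ * a ^ height w

/-- `f 0, f 1, …, f k` is a walk in the filling graph. -/
def IsWalk {F : HypFilling Z a} (τ : ℝ) (k : ℕ) (f : ℕ → F.Vertex) : Prop :=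
  ∀ i < k, Adj τ (f i) (f (i + 1))

/-- Two vertices are joined by a walk. -/
def Joined {F : HypFilling Z a} (τ : ℝ) (v w : F.Vertex) : Prop :=
  ∃ (k : ℕ) (f : ℕ → F.Vertex), f 0 = v ∧ f k = w ∧ IsWalk τ k f

/-- The graph distance: the minimal number of edges of a walk joining `v` to `w`. -/
noncomputable def graphDist {F : HypFilling Z a} (τ : ℝ) (v w : F.Vertex) : ℕ :=
  sInf {k : ℕ | ∃ f : ℕ → F.Vertex, f 0 = v ∧ f k = w ∧ IsWalk τ k f}

/-- The Gromov product `(v|w)_h` formed with heights and graph distances. -/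
noncomputable def gpH {F : HypFilling Z a} (τ : ℝ) (v w : F.Vertex) : ℝ :=
  ((height v : ℝ) + (height w : ℝ) - (graphDist τ v w : ℝ)) / 2

/-- An ascending vertical walk from `u` to `v`. -/
def VertWalkUp {F : HypFilling Z a} (τ : ℝ) (u v : F.Vertex) : Prop :=
  ∃ (k : ℕ) (f : ℕ → F.Vertex), f 0 = u ∧ f k = v ∧
    ∀ i < k, Adj τ (f i) (f (i + 1)) ∧ height (f (i + 1)) = height (f i) + 1

/-- A cone point for the pair `{v, w}`: a vertex joined to each of `v` and `w` by a
vertical walk, of height at most `min (height v) (height w)`. -/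
def ConePoint {F : HypFilling Z a} (τ : ℝ) (u v w : F.Vertex) : Prop :=
  VertWalkUp τ u v ∧ VertWalkUp τ u w ∧ height u ≤ min (height v) (height w)

/-- A branch point for the pair `{v, w}`: a cone point of maximal height. -/
def BranchPoint {F : HypFilling Z a} (τ : ℝ) (u v w : F.Vertex) : Prop :=
  ConePoint τ u v w ∧ ∀ u' : F.Vertex, ConePoint τ u' v w → height u' ≤ height u

end HypFilling

open UniformSpace

lemma aux_adj {Z : Type*} [MetricSpace Z] {a τ : ℝ}
    (ha0 : 0 < a) (ha1 : a < 1) (hτ3 : 3 < τ) {F : HypFilling Z a}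
    (z : Completion Z) (n : ℤ) (v w : F.Vertex)
    (hv : HypFilling.height v = n) (hw : HypFilling.height w = n + 1)
    (hdv : dist z ((HypFilling.pt v : Z) : Completion Z) < (τ / 3) * a ^ n)
    (hdw : dist z ((HypFilling.pt w : Z) : Completion Z) < (τ / 3) * a ^ (n + 1)) :
    HypFilling.Adj τ v w := by
  have han : (0:ℝ) < a ^ n := zpow_pos ha0 n
  have han1 : a ^ (n+1) ≤ a ^ n := by
    rw [zpow_add_one₀ (ne_of_gt ha0)]
    nlinarith
  refine ⟨?_, ?_, HypFilling.pt w, ?_, ?_⟩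
  · intro h; rw [h, hw] at hv; omega
  · rw [hv, hw]; simp
  · rw [hv]
    have : dist (HypFilling.pt w) (HypFilling.pt v)
        = dist ((HypFilling.pt w : Z) : Completion Z) ((HypFilling.pt v : Z) : Completion Z) :=
      (Completion.dist_eq _ _).symm
    rw [this]
    calc dist ((HypFilling.pt w : Z) : Completion Z) ((HypFilling.pt v : Z) : Completion Z)
        ≤ dist ((HypFilling.pt w : Z) : Completion Z) z
          + dist z ((HypFilling.pt v : Z) : Completion Z) := dist_triangle _ _ _
      _ < (τ / 3) * a ^ (n+1) + (τ / 3) * a ^ n := by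
          rw [dist_comm]; exact add_lt_add hdw hdv
      _ ≤ τ * a ^ n := by nlinarith
  · rw [hw, dist_self]; positivity

open UniformSpace in
lemma aux_near {Z : Type*} [MetricSpace Z] {a τ : ℝ}
    (ha0 : 0 < a) (hτ3 : 3 < τ) (F : HypFilling Z a)
    (z : Completion Z) (n : ℤ) :
    ∃ v : F.Vertex, HypFilling.height v = n ∧
      dist z ((HypFilling.pt v : Z) : Completion Z) < (τ / 3) * a ^ n := by
  have han : (0:ℝ) < a ^ n := zpow_pos ha0 n
  have hε : (0:ℝ) < (τ / 3 - 1) * a ^ n := by nlinarith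
  obtain ⟨y, hy⟩ := (Completion.denseRange_coe (α := Z)).exists_dist_lt z hε
  obtain ⟨x, hx, hxy⟩ := F.maximal n y
  refine ⟨⟨(x, n), hx⟩, rfl, ?_⟩
  calc dist z ((x : Z) : Completion Z)
      ≤ dist z ((y : Z) : Completion Z) + dist ((y : Z) : Completion Z) ((x : Z) : Completion Z) :=
        dist_triangle _ _ _
    _ < (τ / 3 - 1) * a ^ n + a ^ n := by
        rw [Completion.dist_eq]; exact add_lt_add hy hxy
    _ = (τ / 3) * a ^ n := by ring



open UniformSpace in
/-- Theorem: every point of the completion `Z̄` is the anchor of a vertical geodesic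
line in the hyperbolic filling; moreover the line can be chosen through any given
vertex lying over the anchor point. -/
theorem statement18 {Z : Type*} [MetricSpace Z] (a τ : ℝ)
    (ha0 : 0 < a) (ha1 : a < 1) (hτ : max 3 (1 / (1 - a)) < τ)
    (F : HypFilling Z a) :
    (∀ z : Completion Z, ∃ v : ℤ → F.Vertex,
      (∀ n : ℤ, HypFilling.height (v n) = n) ∧
      (∀ n : ℤ, HypFilling.Adj τ (v n) (v (n + 1))) ∧
      (∀ n : ℤ, dist z ((HypFilling.pt (v n) : Z) : Completion Z) < (τ / 3) * a ^ n)) ∧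
    (∀ (m : ℤ) (z₀ : Z) (hz : z₀ ∈ F.S m), ∃ v : ℤ → F.Vertex,
      (∀ n : ℤ, HypFilling.height (v n) = n) ∧
      (∀ n : ℤ, HypFilling.Adj τ (v n) (v (n + 1))) ∧
      (∀ n : ℤ, dist ((z₀ : Z) : Completion Z) ((HypFilling.pt (v n) : Z) : Completion Z) <
        (τ / 3) * a ^ n) ∧
      v m = ⟨(z₀, m), hz⟩) := by
  have hτ3 : 3 < τ := lt_of_le_of_lt (le_max_left _ _) hτ
  constructor
  · intro z
    choose v hh hd using fun n => aux_near ha0 hτ3 F z n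
    exact ⟨v, hh, fun n => aux_adj ha0 ha1 hτ3 z n _ _ (hh n) (hh (n+1)) (hd n) (hd (n+1)), hd⟩
  · intro m z₀ hz
    choose w hh hd using fun n => aux_near ha0 hτ3 F ((z₀ : Z) : Completion Z) n
    set v : ℤ → F.Vertex := fun n => if n = m then ⟨(z₀, m), hz⟩ else w n with hv
    have hh' : ∀ n : ℤ, HypFilling.height (v n) = n := by
      intro n
      by_cases h : n = m
      · subst h; simp [hv, HypFilling.height]
      · simp [hv, h, hh n]
    have hd' : ∀ n : ℤ, dist ((z₀ : Z) : Completion Z)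
        ((HypFilling.pt (v n) : Z) : Completion Z) < (τ / 3) * a ^ n := by
      intro n
      by_cases h : n = m
      · have hp : HypFilling.pt (v n) = z₀ := by simp [hv, h, HypFilling.pt]
        rw [hp, dist_self]
        have := zpow_pos ha0 n
        positivity
      · simpa [hv, h] using hd n
    exact ⟨v, hh', fun n => aux_adj ha0 ha1 hτ3 _ n _ _ (hh' n) (hh' (n+1)) (hd' n) (hd' (n+1)),
      hd', by simp [hv]; rfl⟩
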